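/- If the annihilator Ann(v) of a generator v of the cyclic kG-module V is a two-sided ideal of kG, then Sym(G,w) = Sym(G,v) for every generator w ∈ Gen(V), and every generator of V is a generic point. -/

import Mathlib

section Aux
variable {k G V : Type*} [Field k] [Group G] [Finite G]
    [AddCommGroup V] [Module k V]

/-- evaluation map a ↦ a • u -/
noncomputable def evalMapAux (ρ : Representation k G V) (u : V) :
    MonoidAlgebra k G →ₗ[k] V :=
  (LinearMap.applyₗ u).comp ρ.asAlgebraHom.toLinearMap

lemma evalMapAux_apply (ρ : Representation k G V) (u : V) (a : MonoidAlgebra k G) :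
    evalMapAux ρ u a = ρ.asAlgebraHom a u := rfl

lemma evalMapAux_surj (ρ : Representation k G V) (u : V)
    (hu : Submodule.span k (Set.range fun g : G => ρ g u) = ⊤) :
    Function.Surjective (evalMapAux ρ u) := by
  rw [← LinearMap.range_eq_top, eq_top_iff, ← hu, Submodule.span_le]
  rintro x ⟨g, rfl⟩
  exact ⟨MonoidAlgebra.single g (1:k), by
    simp [evalMapAux_apply, Representation.asAlgebraHom_single]⟩

lemma finDimMonoidAlgebra (k G : Type*) [Field k] [Group G] [Finite G] :
    FiniteDimensional k (MonoidAlgebra k G) := by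
  have := Fintype.ofFinite G
  exact (inferInstance : FiniteDimensional k (MonoidAlgebra k G))

lemma ker_eq_aux (ρ : Representation k G V) (v w : V)
    (hv : Submodule.span k (Set.range fun g : G => ρ g v) = ⊤)
    (hw : Submodule.span k (Set.range fun g : G => ρ g w) = ⊤)
    (htwosided : ∀ a b : MonoidAlgebra k G, ρ.asAlgebraHom a v = 0 →
      ρ.asAlgebraHom (a * b) v = 0) :
    LinearMap.ker (evalMapAux ρ v) = LinearMap.ker (evalMapAux ρ w) := by
  have := finDimMonoidAlgebra k G
  have hfv := evalMapAux_surj ρ v hv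
  have hfw := evalMapAux_surj ρ w hw
  have hle : LinearMap.ker (evalMapAux ρ v) ≤ LinearMap.ker (evalMapAux ρ w) := by
    intro a ha
    rw [LinearMap.mem_ker, evalMapAux_apply] at ha ⊢
    obtain ⟨b, hb⟩ := hfv w
    rw [evalMapAux_apply] at hb
    rw [← hb, ← LinearMap.comp_apply, ← Module.End.mul_eq_comp, ← map_mul]
    exact htwosided a b ha
  refine Submodule.eq_of_le_of_finrank_eq hle ?_
  have h1 := LinearMap.finrank_range_add_finrank_ker (evalMapAux ρ v)
  have h2 := LinearMap.finrank_range_add_finrank_ker (evalMapAux ρ w)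
  rw [LinearMap.range_eq_top.mpr hfv, finrank_top] at h1
  rw [LinearMap.range_eq_top.mpr hfw, finrank_top] at h2
  omega

lemma exists_phi_aux (ρ : Representation k G V) (v w : V)
    (hv : Submodule.span k (Set.range fun g : G => ρ g v) = ⊤)
    (hw : Submodule.span k (Set.range fun g : G => ρ g w) = ⊤)
    (htwosided : ∀ a b : MonoidAlgebra k G, ρ.asAlgebraHom a v = 0 →
      ρ.asAlgebraHom (a * b) v = 0) :
    ∃ φ : V ≃ₗ[k] V, ∀ a : MonoidAlgebra k G,
      φ (ρ.asAlgebraHom a v) = ρ.asAlgebraHom a w := by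
  have hker := ker_eq_aux ρ v w hv hw htwosided
  have hfv := evalMapAux_surj ρ v hv
  have hfw := evalMapAux_surj ρ w hw
  let e₁ := (evalMapAux ρ v).quotKerEquivOfSurjective hfv
  let e₂ := (evalMapAux ρ w).quotKerEquivOfSurjective hfw
  let q := Submodule.quotEquivOfEq _ _ hker
  refine ⟨e₁.symm.trans (q.trans e₂), fun a => ?_⟩
  have h1 : e₁ (Submodule.Quotient.mk a) = ρ.asAlgebraHom a v := rfl
  have h2 : e₂ (Submodule.Quotient.mk a) = ρ.asAlgebraHom a w := rfl
  have h3 : e₁.symm (ρ.asAlgebraHom a v) = Submodule.Quotient.mk a := by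
    rw [← h1, LinearEquiv.symm_apply_apply]
  simp only [LinearEquiv.trans_apply, h3]
  rw [show q (Submodule.Quotient.mk a) = Submodule.Quotient.mk a from rfl, h2]

end Aux

theorem twosided_annihilator_all_generators_generic
    {k G V : Type*} [Field k] [Infinite k] [Group G] [Finite G]
    [AddCommGroup V] [Module k V]
    (ρ : Representation k G V) (v : V)
    (hv : Submodule.span k (Set.range fun g : G => ρ g v) = ⊤)
    (htwosided : ∀ a b : MonoidAlgebra k G, ρ.asAlgebraHom a v = 0 →
      ρ.asAlgebraHom (a * b) v = 0) :
    (∀ w : V, Submodule.span k (Set.range fun g : G => ρ g w) = ⊤ →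
      ∀ π : Equiv.Perm G,
        ((∃ A : V ≃ₗ[k] V, ∀ g : G, A (ρ g w) = ρ (π g) w) ↔
          (∃ A : V ≃ₗ[k] V, ∀ g : G, A (ρ g v) = ρ (π g) v))) ∧
    (∀ w : V, Submodule.span k (Set.range fun g : G => ρ g w) = ⊤ →
      ∀ g : G, ρ g w = w → ∀ u : V, ρ g u = u) := by
  have hsingle : ∀ (u : V) (g : G),
      ρ.asAlgebraHom (MonoidAlgebra.single g (1:k)) u = ρ g u := by
    intro u g; simp [Representation.asAlgebraHom_single]
  constructor
  · intro w hw π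
    obtain ⟨φ, hφ⟩ := exists_phi_aux ρ v w hv hw htwosided
    have hφg : ∀ g : G, φ (ρ g v) = ρ g w := by
      intro g; rw [← hsingle v g, hφ, hsingle]
    constructor
    · rintro ⟨A, hA⟩
      refine ⟨(φ.trans A).trans φ.symm, fun g => ?_⟩
      simp only [LinearEquiv.trans_apply, hφg, hA]
      exact φ.symm_apply_eq.mpr (hφg (π g)).symm
    · rintro ⟨A, hA⟩
      refine ⟨(φ.symm.trans A).trans φ, fun g => ?_⟩
      have : φ.symm (ρ g w) = ρ g v := φ.symm_apply_eq.mpr (hφg g).symm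
      simp only [LinearEquiv.trans_apply, this, hA, hφg]
  · intro w hw g hg u
    have hker := ker_eq_aux ρ v w hv hw htwosided
    set a : MonoidAlgebra k G := MonoidAlgebra.single g (1:k) - 1 with ha
    have haw : ρ.asAlgebraHom a w = 0 := by
      rw [ha, map_sub, map_one, LinearMap.sub_apply, Module.End.one_apply, hsingle, hg,
        sub_self]
    have hav : ρ.asAlgebraHom a v = 0 := by
      have : a ∈ LinearMap.ker (evalMapAux ρ w) := haw
      rw [← hker] at this
      exact this
    obtain ⟨b, hb⟩ := evalMapAux_surj ρ v hv u
    rw [evalMapAux_apply] at hb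
    have : ρ.asAlgebraHom a u = 0 := by
      rw [← hb, ← LinearMap.comp_apply, ← Module.End.mul_eq_comp, ← map_mul]
      exact htwosided a b hav
    rw [ha, map_sub, map_one, LinearMap.sub_apply, Module.End.one_apply, hsingle,
      sub_eq_zero] at this
    exact this
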